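/- Let d ≥ 1 be an even integer, write d = 2^r·e with e odd and r ≥ 1. Then there exists an integer x with x² ≡ 1 - 4d (mod 16d). -/
import Mathlib

/-- Any integer ≡ 1 mod 8 is a square modulo every power of 2. -/
lemma sq_mod_pow_two (a : ℤ) (ha : a ≡ 1 [ZMOD 8]) :
    ∀ n : ℕ, 3 ≤ n → ∃ x : ℤ, x ^ 2 ≡ a [ZMOD 2 ^ n] := by
  intro n hn
  induction n with
  | zero => omega
  | succ n ih =>
    rcases Nat.lt_or_ge n 3 with h3 | h3
    · have hn2 : n = 2 := by omega
      subst hn2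
      exact ⟨1, by norm_num; simpa using ha.symm⟩
    · obtain ⟨x, hx⟩ := ih h3
      have h8 : (8 : ℤ) ∣ 2 ^ n := by
        have : (2:ℤ)^3 ∣ 2^n := pow_dvd_pow 2 h3
        simpa using this
      have hx8 : x ^ 2 ≡ 1 [ZMOD 8] := (hx.of_dvd h8).trans (ha.of_dvd dvd_rfl)
      have hxodd : Odd x := by
        rcases Int.even_or_odd x with hev | hod
        · exfalso
          have h2 : (2:ℤ) ∣ x^2 := Dvd.dvd.trans hev.two_dvd (dvd_pow_self x two_ne_zero)
          have : (8:ℤ) ∣ x^2 - 1 := Int.ModEq.dvd hx8.symm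
          obtain ⟨c, hc⟩ := this
          obtain ⟨y, hy⟩ := h2
          omega
        · exact hod
      obtain ⟨m, hm⟩ := hxodd
      obtain ⟨k, hk⟩ : (2:ℤ)^n ∣ x^2 - a := Int.ModEq.dvd hx.symm
      refine ⟨x + k * 2 ^ (n-1), ?_⟩
      have key : (2:ℤ)^(n+1) ∣ (x + k * 2^(n-1))^2 - a := by
        have h2n : (2:ℤ)^n = 2 * 2^(n-1) := by
          rw [← pow_succ']; congr 1; omega
        have expand : (x + k * 2^(n-1))^2 - a
            = (x^2 - a) + 2^n * (k * (x+1)) - k * 2^n + k^2 * (2^(n-1))^2 := by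
          rw [h2n]; ring
        rw [expand, hk]
        have d1 : (2:ℤ)^(n+1) ∣ 2^n * k + 2^n * (k * (x+1)) - k * 2^n := by
          have heq : (2:ℤ)^n * k + 2^n * (k * (x+1)) - k * 2^n
              = 2^(n+1) * (k * (m+1)) := by rw [hm]; ring
          rw [heq]; exact Dvd.intro _ rfl
        have d2 : (2:ℤ)^(n+1) ∣ k^2 * (2^(n-1))^2 := by
          have : (2:ℤ)^(n+1) ∣ (2^(n-1))^2 := by
            rw [← pow_mul]; exact pow_dvd_pow 2 (by omega)
          exact Dvd.dvd.mul_left this _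
        exact dvd_add d1 d2
      have hneg : (2:ℤ)^(n+1) ∣ a - (x + k * 2^(n-1))^2 := by
        have := key.neg_right; simpa using (dvd_neg.mpr key)
      exact (Int.modEq_iff_dvd.mpr key).symm

/-- For even d ≥ 1, written d = 2^r·e with e odd and r ≥ 1, there exists an
integer x with x² ≡ 1 - 4d (mod 16d). -/
theorem stmt16 (d e : ℤ) (r : ℕ) (hr : 1 ≤ r) (he : Odd e)
    (hde : d = 2^r * e) (hd : 1 ≤ d) :
    ∃ x : ℤ, x^2 ≡ 1 - 4*d [ZMOD 16*d] := by
  set a : ℤ := 1 - 4*d with ha_def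
  have h2d : (2:ℤ) ∣ d := by
    rw [hde]
    exact Dvd.dvd.mul_right (dvd_pow_self 2 (by omega)) e
  have ha : a ≡ 1 [ZMOD 8] := by
    obtain ⟨c, hc⟩ := h2d
    have : (8:ℤ) ∣ 1 - a := ⟨c, by rw [ha_def, hc]; ring⟩
    exact Int.modEq_iff_dvd.mpr this
  obtain ⟨x0, hx0⟩ := sq_mod_pow_two a ha (r+4) (by omega)
  set m : ℤ := 2^(r+4) with hm_def
  have hcop : IsCoprime m e := by
    have h2e : ¬ (2:ℤ) ∣ e := by
      obtain ⟨t, ht⟩ := he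
      rintro ⟨c, hc⟩
      omega
    exact (IsCoprime.pow_left ((Int.prime_two.coprime_iff_not_dvd).mpr h2e))
  obtain ⟨u, v, huv⟩ := id hcop
  refine ⟨x0 * (v * e) + u * m, ?_⟩
  set x : ℤ := x0 * (v * e) + u * m with hx_def
  have hxm : x ≡ x0 [ZMOD m] := by
    have : m ∣ x - x0 := ⟨u * (1 - x0), by
      have hve : v * e = 1 - u * m := by linarith
      rw [hx_def, hve]; ring⟩
    exact (Int.modEq_iff_dvd.mpr this).symm
  have hxe : x ≡ 1 [ZMOD e] := by
    have : e ∣ x - 1 := ⟨v * (x0 - 1), by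
      have hum : u * m = 1 - v * e := by linarith
      rw [hx_def, hum]; ring⟩
    exact (Int.modEq_iff_dvd.mpr this).symm
  have h1 : x^2 ≡ a [ZMOD m] := (hxm.pow 2).trans hx0
  have h2 : x^2 ≡ a [ZMOD e] := by
    have hea : (1:ℤ) ≡ a [ZMOD e] := by
      have : e ∣ 1 - a := ⟨4 * 2^r, by rw [ha_def, hde]; ring⟩
      exact (Int.modEq_iff_dvd.mpr this).symm
    calc x^2 ≡ 1^2 [ZMOD e] := hxe.pow 2
      _ = 1 := one_pow 2
      _ ≡ a [ZMOD e] := hea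
  have hmul : x^2 ≡ a [ZMOD m * e] :=
    (Int.modEq_and_modEq_iff_modEq_mul (by simpa [Int.isCoprime_iff_gcd_eq_one, Int.gcd] using hcop)).mp ⟨h1, h2⟩
  have hme : m * e = 16 * d := by rw [hm_def, hde, pow_add]; ring
  rwa [hme] at hmul
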